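/- (Lemma 1, risk decomposition under symmetric loss) Let ρ' = α ρ_E + (1-α) ρ_N and ρ_π = κ ρ_E + (1-κ) ρ_N be mixtures of probability measures ρ_E, ρ_N with α, κ ∈ [0,1], and let ρ_π^λ = λ ρ_N + (1-λ) ρ_π for λ ∈ [0,1]. If ℓ is a symmetric loss with ℓ(z) + ℓ(-z) = c for all z, then for any bounded measurable classifier g, R(g; ρ', ρ_π^λ, ℓ) = (α - κ(1-λ)) · R(g; ρ_E, ρ_N, ℓ) + c(1 - α + κ(1-λ))/2, where R(g; μ, ν, ℓ) = (1/2)E_μ[ℓ(g)] + (1/2)E_ν[ℓ(-g)]. -/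

import Mathlib

open MeasureTheory ENNReal

noncomputable def balancedRisk {X : Type*} [MeasurableSpace X]
    (μ ν : Measure X) (ℓ : ℝ → ℝ) (g : X → ℝ) : ℝ :=
  (1/2) * ∫ x, ℓ (g x) ∂μ + (1/2) * ∫ x, ℓ (-g x) ∂ν

lemma integral_mix_aux {X : Type*} [MeasurableSpace X] (μ ν : Measure X)
    (a b : ℝ) (ha : 0 ≤ a) (hb : 0 ≤ b) (f : X → ℝ)
    (hf1 : Integrable f μ) (hf2 : Integrable f ν) :
    ∫ x, f x ∂(ENNReal.ofReal a • μ + ENNReal.ofReal b • ν)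
      = a * ∫ x, f x ∂μ + b * ∫ x, f x ∂ν := by
  rw [integral_add_measure (hf1.smul_measure ofReal_ne_top)
      (hf2.smul_measure ofReal_ne_top),
    integral_smul_measure, integral_smul_measure,
    ENNReal.toReal_ofReal ha, ENNReal.toReal_ofReal hb,
    smul_eq_mul, smul_eq_mul]

theorem risk_decomposition_symmetric_loss {X : Type*} [MeasurableSpace X]
    (ρE ρN : Measure X) [IsProbabilityMeasure ρE] [IsProbabilityMeasure ρN]
    (α κ lam : ℝ) (hα : α ∈ Set.Icc (0:ℝ) 1) (hκ : κ ∈ Set.Icc (0:ℝ) 1)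
    (hlam : lam ∈ Set.Icc (0:ℝ) 1)
    (ℓ : ℝ → ℝ) (c : ℝ) (hsym : ∀ z : ℝ, ℓ z + ℓ (-z) = c)
    (g : X → ℝ) (hg : Measurable g) (C : ℝ) (hbd : ∀ x, |g x| ≤ C)
    (h1 : Integrable (fun x => ℓ (g x)) ρE)
    (h2 : Integrable (fun x => ℓ (g x)) ρN)
    (h3 : Integrable (fun x => ℓ (-g x)) ρE)
    (h4 : Integrable (fun x => ℓ (-g x)) ρN)
    (ρ' ρπ ρπl : Measure X)
    (hρ' : ρ' = ENNReal.ofReal α • ρE + ENNReal.ofReal (1 - α) • ρN)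
    (hρπ : ρπ = ENNReal.ofReal κ • ρE + ENNReal.ofReal (1 - κ) • ρN)
    (hρπl : ρπl = ENNReal.ofReal lam • ρN + ENNReal.ofReal (1 - lam) • ρπ) :
    balancedRisk ρ' ρπl ℓ g
      = (α - κ * (1 - lam)) * balancedRisk ρE ρN ℓ g
        + c * (1 - α + κ * (1 - lam)) / 2 := by
  obtain ⟨hα0, hα1⟩ := hα
  obtain ⟨hκ0, hκ1⟩ := hκ
  obtain ⟨hl0, hl1⟩ := hlam
  have h3π : Integrable (fun x => ℓ (-g x)) ρπ := by
    rw [hρπ]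
    exact (h3.smul_measure ofReal_ne_top).add_measure (h4.smul_measure ofReal_ne_top)
  have hE : ∫ x, ℓ (-g x) ∂ρE = c - ∫ x, ℓ (g x) ∂ρE := by
    have := integral_add h1 h3
    simp only [hsym, integral_const, measure_univ, ENNReal.toReal_one, probReal_univ, smul_eq_mul,
      one_mul] at this
    linarith
  have hN : ∫ x, ℓ (-g x) ∂ρN = c - ∫ x, ℓ (g x) ∂ρN := by
    have := integral_add h2 h4
    simp only [hsym, integral_const, measure_univ, ENNReal.toReal_one, probReal_univ, smul_eq_mul,
      one_mul] at this
    linarith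
  have I1 : ∫ x, ℓ (g x) ∂ρ' = α * ∫ x, ℓ (g x) ∂ρE + (1 - α) * ∫ x, ℓ (g x) ∂ρN := by
    rw [hρ']; exact integral_mix_aux _ _ _ _ hα0 (by linarith) _ h1 h2
  have I2 : ∫ x, ℓ (-g x) ∂ρπ = κ * ∫ x, ℓ (-g x) ∂ρE + (1 - κ) * ∫ x, ℓ (-g x) ∂ρN := by
    rw [hρπ]; exact integral_mix_aux _ _ _ _ hκ0 (by linarith) _ h3 h4
  have I3 : ∫ x, ℓ (-g x) ∂ρπl = lam * ∫ x, ℓ (-g x) ∂ρN + (1 - lam) * ∫ x, ℓ (-g x) ∂ρπ := by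
    rw [hρπl]; exact integral_mix_aux _ _ _ _ hl0 (by linarith) _ h4 h3π
  simp only [balancedRisk, I1, I3, I2, hE, hN]
  ring
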